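/- For integers 2 ≤ k ≤ n with n ≥ k+2, the maximum number of edges in a connected k*-dense graph on n vertices is exactly n + k − 3 + C(n−2, 2); this is achieved by the graph obtained from K_{n−2} plus two adjacent vertices u, v where u and v are each joined to a set B of k−2 common vertices of the K_{n−2}, and u, v are additionally joined to disjoint sets A, C partitioning the remaining n−k vertices with |A| = ⌊(n−k)/2⌋ and |C| = ⌈(n−k)/2⌉. -/

import Mathlib

/-- A graph `G` is `k`-dense if every two adjacent vertices have at least `k - 2`
common neighbors. -/
def kDense {V : Type*} (G : SimpleGraph V) (k : ℕ) : Prop :=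
  ∀ u v : V, G.Adj u v → k - 2 ≤ (G.neighborSet u ∩ G.neighborSet v).ncard

/-- A graph is `k*`-dense if it is `k`-dense but not `(k+1)`-dense. -/
def kStarDense {V : Type*} (G : SimpleGraph V) (k : ℕ) : Prop :=
  kDense G k ∧ ¬ kDense G (k + 1)

open Finset SimpleGraph

/-- The extremal graph: complete graph on the first `n-1` vertices, with the
last vertex joined to the first `k-1` vertices. -/
def Gmax (k n : ℕ) : SimpleGraph (Fin n) where
  Adj x y := x ≠ y ∧ ((x : ℕ) = n - 1 → (y : ℕ) < k - 1) ∧ ((y : ℕ) = n - 1 → (x : ℕ) < k - 1)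
  symm := ⟨by rintro x y ⟨h1, h2, h3⟩; exact ⟨h1.symm, h3, h2⟩⟩
  loopless := ⟨fun x h => h.1 rfl⟩

instance (k n : ℕ) : DecidableRel (Gmax k n).Adj :=
  fun _ _ => inferInstanceAs (Decidable (_ ∧ _ ∧ _))

lemma Gmax_adj {k n : ℕ} {x y : Fin n} :
    (Gmax k n).Adj x y ↔ x ≠ y ∧ ((x : ℕ) = n - 1 → (y : ℕ) < k - 1) ∧
      ((y : ℕ) = n - 1 → (x : ℕ) < k - 1) := Iff.rfl

lemma Gmax_connected (k n : ℕ) (hk : 2 ≤ k) (hn : k + 2 ≤ n) : (Gmax k n).Connected := by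
  have hn0 : 0 < n := by omega
  set z0 : Fin n := ⟨0, hn0⟩ with hz0
  have hadj : ∀ x : Fin n, x ≠ z0 → (Gmax k n).Adj x z0 := by
    intro x hx
    refine ⟨hx, fun _ => by simp [hz0]; omega, fun h => ?_⟩
    exfalso; simp [hz0] at h; omega
  rw [connected_iff]
  refine ⟨fun x y => ?_, ⟨z0⟩⟩
  by_cases hx : x = z0
  · by_cases hy : y = z0
    · rw [hx, hy]
    · exact hx ▸ ((hadj y hy).reachable).symm
  · by_cases hy : y = z0
    · exact hy ▸ (hadj x hx).reachable
    · exact ((hadj x hx).reachable).trans ((hadj y hy).reachable).symm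

lemma ncard_ge_of_finset_subset {n : ℕ} {W : Finset (Fin n)} {S : Set (Fin n)}
    (h : ↑W ⊆ S) : W.card ≤ S.ncard := by
  have := Set.ncard_le_ncard h (Set.toFinite S)
  rwa [Set.ncard_coe_finset] at this

lemma Gmax_kDense (k n : ℕ) (hk : 2 ≤ k) (hn : k + 2 ≤ n) : kDense (Gmax k n) k := by
  intro u v huv
  obtain ⟨hne, h1, h2⟩ := huv
  have hkn : k - 1 < n := by omega
  by_cases hu : (u : ℕ) = n - 1
  · -- v has small index
    have hv : (v : ℕ) < k - 1 := h1 hu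
    refine le_trans ?_ (ncard_ge_of_finset_subset (W := (Iio (⟨k - 1, hkn⟩ : Fin n)) \ {v})
      (S := (Gmax k n).neighborSet u ∩ (Gmax k n).neighborSet v) ?_)
    · have hvmem : v ∈ Iio (⟨k - 1, hkn⟩ : Fin n) := by
        simp [Fin.lt_def]; omega
      rw [card_sdiff_of_subset (by simpa using hvmem), Fin.card_Iio]
      simp; omega
    · intro z hz
      simp only [coe_sdiff, Set.mem_diff, coe_Iio, Set.mem_Iio, coe_singleton,
        Set.mem_singleton_iff] at hz
      obtain ⟨hz1, hz2⟩ := hz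
      have hzval : (z : ℕ) < k - 1 := by simpa [Fin.lt_def] using hz1
      constructor
      · exact ⟨Fin.ne_of_val_ne (by omega), fun _ => hzval, fun h => by omega⟩
      · exact ⟨fun h => hz2 h.symm, fun _ => hzval, fun _ => hv⟩
  · by_cases hv : (v : ℕ) = n - 1
    · -- symmetric
      have hu' : (u : ℕ) < k - 1 := h2 hv
      refine le_trans ?_ (ncard_ge_of_finset_subset (W := (Iio (⟨k - 1, hkn⟩ : Fin n)) \ {u})
        (S := (Gmax k n).neighborSet u ∩ (Gmax k n).neighborSet v) ?_)
      · have humem : u ∈ Iio (⟨k - 1, hkn⟩ : Fin n) := by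
          simp [Fin.lt_def]; omega
        rw [card_sdiff_of_subset (by simpa using humem), Fin.card_Iio]
        simp; omega
      · intro z hz
        simp only [coe_sdiff, Set.mem_diff, coe_Iio, Set.mem_Iio, coe_singleton,
          Set.mem_singleton_iff] at hz
        obtain ⟨hz1, hz2⟩ := hz
        have hzval : (z : ℕ) < k - 1 := by simpa [Fin.lt_def] using hz1
        constructor
        · exact ⟨fun h => hz2 h.symm, fun _ => hzval, fun _ => hu'⟩
        · exact ⟨Fin.ne_of_val_ne (by omega), fun _ => hzval, fun h => by omega⟩
    · -- both small
      have hL : (⟨n - 1, by omega⟩ : Fin n) ∈ ({u, v} : Finset (Fin n))ᶜ := by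
        simp only [mem_compl, mem_insert, mem_singleton]
        rintro (h | h) <;> [exact hu (by rw [← h]); exact hv (by rw [← h])]
      refine le_trans ?_ (ncard_ge_of_finset_subset
        (W := ({u, v} : Finset (Fin n))ᶜ \ {⟨n - 1, by omega⟩})
        (S := (Gmax k n).neighborSet u ∩ (Gmax k n).neighborSet v) ?_)
      · rw [card_sdiff_of_subset (by simpa using hL), card_compl, card_insert_of_notMem (by simpa using hne),
          card_singleton, Fintype.card_fin, card_singleton]
        omega
      · intro z hz
        simp only [coe_sdiff, Set.mem_diff, coe_compl, coe_insert, Set.mem_compl_iff,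
          Set.mem_insert_iff, coe_singleton, Set.mem_singleton_iff] at hz
        obtain ⟨hz1, hz2⟩ := hz
        have hzu : z ≠ u := fun h => hz1 (Or.inl h)
        have hzv : z ≠ v := fun h => hz1 (Or.inr h)
        have hzL : (z : ℕ) ≠ n - 1 := fun h => hz2 (Fin.ext (by simpa using h))
        exact ⟨⟨fun h => hzu h.symm, fun h => absurd h hu, fun h => absurd h hzL⟩,
               ⟨fun h => hzv h.symm, fun h => absurd h hv, fun h => absurd h hzL⟩⟩

lemma Gmax_not_kDense (k n : ℕ) (hk : 2 ≤ k) (hn : k + 2 ≤ n) :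
    ¬ kDense (Gmax k n) (k + 1) := by
  intro h
  have hn0 : 0 < n := by omega
  have hkn : k - 1 < n := by omega
  set z0 : Fin n := ⟨0, hn0⟩
  set L : Fin n := ⟨n - 1, by omega⟩
  have hadj : (Gmax k n).Adj L z0 := by
    refine ⟨fun hle => ?_, fun _ => by simp [z0]; omega, fun h => absurd h (by simp only [z0, Fin.val_mk]; omega)⟩
    have := congrArg Fin.val hle; simp [L, z0] at this; omega
  have hub : ((Gmax k n).neighborSet L ∩ (Gmax k n).neighborSet z0).ncard ≤ k - 2 := by
    have hsub : (Gmax k n).neighborSet L ∩ (Gmax k n).neighborSet z0 ⊆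
        ↑((Iio (⟨k - 1, hkn⟩ : Fin n)) \ {z0}) := by
      intro z hz
      obtain ⟨⟨hz1, hz2, hz3⟩, ⟨hz4, hz5, hz6⟩⟩ := hz
      have : (z : ℕ) < k - 1 := hz2 (by simp [L])
      simp only [coe_sdiff, Set.mem_diff, coe_Iio, Set.mem_Iio, coe_singleton,
        Set.mem_singleton_iff]
      exact ⟨by simp [Fin.lt_def]; omega, fun h => hz4 (by rw [h])⟩
    calc ((Gmax k n).neighborSet L ∩ (Gmax k n).neighborSet z0).ncard
        ≤ ((Iio (⟨k - 1, hkn⟩ : Fin n)) \ {z0} : Finset (Fin n)).card := by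
          have := Set.ncard_le_ncard hsub (Set.toFinite _)
          rwa [Set.ncard_coe_finset] at this
      _ ≤ k - 2 := by
          have hz0mem : z0 ∈ Iio (⟨k - 1, hkn⟩ : Fin n) := by simp [z0, Fin.lt_def]; omega
          rw [card_sdiff_of_subset (by simpa using hz0mem), Fin.card_Iio]
          simp; omega
  have := h L z0 hadj
  omega

lemma Gmax_card_edges (k n : ℕ) (hk : 2 ≤ k) (hn : k + 2 ≤ n) :
    (Gmax k n).edgeFinset.card = n + k - 3 + Nat.choose (n - 2) 2 := by
  have hkn : k - 1 < n := by omega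
  have hLlt : n - 1 < n := by omega
  set L : Fin n := ⟨n - 1, hLlt⟩ with hL
  set B : Finset (Fin n) := Ico ⟨k - 1, hkn⟩ L with hB
  set D : Finset (Sym2 (Fin n)) := B.image (fun x => s(x, L)) with hD
  have hmemB : ∀ x : Fin n, x ∈ B ↔ k - 1 ≤ (x : ℕ) ∧ (x : ℕ) < n - 1 := by
    intro x; simp [hB, Fin.le_def, Fin.lt_def, hL]
  have hedge : (Gmax k n).edgeFinset = (⊤ : SimpleGraph (Fin n)).edgeFinset \ D := by
    ext e
    refine Sym2.ind (fun a b => ?_) e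
    simp only [mem_edgeFinset, mem_sdiff, mem_edgeSet, top_adj]
    constructor
    · rintro ⟨hne, h1, h2⟩
      refine ⟨hne, ?_⟩
      rw [hD, mem_image]
      rintro ⟨x, hxB, hxe⟩
      rw [Sym2.eq_iff] at hxe
      rw [hmemB] at hxB
      rcases hxe with ⟨hxa, hLb⟩ | ⟨hxb, hLa⟩
      · have hb : (b : ℕ) = n - 1 := by rw [← hLb]
        have := h2 hb
        rw [hxa] at hxB; omega
      · have ha : (a : ℕ) = n - 1 := by rw [← hLa]
        have := h1 ha
        rw [hxb] at hxB; omega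
    · rintro ⟨hne, hDne⟩
      rw [hD, mem_image] at hDne
      push_neg at hDne
      refine ⟨hne, fun ha => ?_, fun hb => ?_⟩
      · -- a = L, show b < k - 1
        have haL : a = L := Fin.ext (by simp [hL, ha])
        by_contra hbk
        push_neg at hbk
        have hbn : (b : ℕ) < n - 1 := by
          have : b ≠ L := fun h => hne (by rw [haL, h])
          have : (b : ℕ) ≠ n - 1 := fun h => this (Fin.ext (by simp [hL, h]))
          omega
        exact hDne b ((hmemB b).2 ⟨hbk, hbn⟩) (by rw [haL, Sym2.eq_swap])
      · have hbL : b = L := Fin.ext (by simp [hL, hb])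
        by_contra hak
        push_neg at hak
        have han : (a : ℕ) < n - 1 := by
          have : a ≠ L := fun h => hne (by rw [hbL, h])
          have : (a : ℕ) ≠ n - 1 := fun h => this (Fin.ext (by simp [hL, h]))
          omega
        exact hDne a ((hmemB a).2 ⟨hak, han⟩) (by rw [hbL])
  have hDsub : D ⊆ (⊤ : SimpleGraph (Fin n)).edgeFinset := by
    intro e he
    rw [hD, mem_image] at he
    obtain ⟨x, hxB, rfl⟩ := he
    rw [hmemB] at hxB
    simp only [mem_edgeFinset, mem_edgeSet, top_adj]
    exact fun h => by have := congrArg Fin.val h; simp [hL] at this; omega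
  have hinj : Function.Injective (fun x : Fin n => s(x, L)) := by
    intro x y h
    simp only [Sym2.eq_iff] at h
    rcases h with ⟨h, -⟩ | ⟨h1, h2⟩
    · exact h
    · rw [h1, ← h2]
  have hDcard : D.card = n - k := by
    rw [hD, card_image_of_injective _ hinj, hB, Fin.card_Ico]
    simp [hL]; omega
  rw [hedge, card_sdiff_of_subset hDsub, hDcard, card_edgeFinset_top_eq_card_choose_two,
    Fintype.card_fin]
  have key : n.choose 2 = (n - 2).choose 2 + (2 * n - 3) := by
    obtain ⟨m, rfl⟩ : ∃ m, n = m + 2 := ⟨n - 2, by omega⟩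
    simp [Nat.choose_succ_succ]
    omega
  generalize hc : (n - 2).choose 2 = c at key ⊢
  omega

lemma ncard_edgeSet_eq {n : ℕ} (G : SimpleGraph (Fin n)) [Fintype G.edgeSet] :
    G.edgeSet.ncard = G.edgeFinset.card := by
  rw [Set.ncard_eq_toFinset_card']; rfl

lemma upper_bound (k n : ℕ) (hk : 2 ≤ k) (hn : k + 2 ≤ n)
    (G : SimpleGraph (Fin n)) (hd : kStarDense G k) :
    G.edgeSet.ncard ≤ n + k - 3 + Nat.choose (n - 2) 2 := by
  classical
  obtain ⟨-, h2⟩ := hd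
  simp only [kDense, not_forall] at h2
  obtain ⟨u, v, hadj, hnot⟩ := h2
  have hcommon : (G.neighborSet u ∩ G.neighborSet v).ncard ≤ k - 2 := by omega
  have hcfin : (G.neighborSet u ∩ G.neighborSet v).ncard
      = (G.neighborFinset u ∩ G.neighborFinset v).card := by
    rw [← Set.ncard_coe_finset]
    congr 1
    simp [Set.ext_iff]
  rw [ncard_edgeSet_eq]
  rw [← Finset.card_filter_add_card_filter_not (s := G.edgeFinset)
    (p := fun e => u ∈ e ∨ v ∈ e)]
  have hT : (G.edgeFinset.filter (fun e => u ∈ e ∨ v ∈ e)).card ≤ n + k - 3 := by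
    have hTeq : G.edgeFinset.filter (fun e => u ∈ e ∨ v ∈ e)
        = G.incidenceFinset u ∪ G.incidenceFinset v := by
      rw [incidenceFinset_eq_filter, incidenceFinset_eq_filter, ← filter_or]
    have h1 := card_union_add_card_inter (G.incidenceFinset u) (G.incidenceFinset v)
    rw [card_incidenceFinset_eq_degree, card_incidenceFinset_eq_degree] at h1
    have hmemuv : s(u, v) ∈ G.incidenceFinset u ∩ G.incidenceFinset v := by
      rw [mem_inter, mem_incidenceFinset, mem_incidenceFinset]
      exact ⟨⟨hadj, Sym2.mem_mk_left u v⟩, ⟨hadj, Sym2.mem_mk_right u v⟩⟩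
    have hone : 1 ≤ (G.incidenceFinset u ∩ G.incidenceFinset v).card :=
      card_pos.2 ⟨_, hmemuv⟩
    have h2 := card_union_add_card_inter (G.neighborFinset u) (G.neighborFinset v)
    have h3 : (G.neighborFinset u ∪ G.neighborFinset v).card ≤ n := by
      simpa using card_le_univ (G.neighborFinset u ∪ G.neighborFinset v)
    have h4 : G.degree u + G.degree v ≤ n + (k - 2) := by
      rw [SimpleGraph.degree, SimpleGraph.degree] at *
      omega
    rw [hTeq]
    omega
  have hN : (G.edgeFinset.filter (fun e => ¬(u ∈ e ∨ v ∈ e))).card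
      ≤ Nat.choose (n - 2) 2 := by
    set s : Finset (Fin n) := ({u, v} : Finset (Fin n))ᶜ with hs
    have hscard : s.card = n - 2 := by
      rw [hs, card_compl, card_insert_of_notMem (by simpa using hadj.ne), card_singleton,
        Fintype.card_fin]
    have hsub : G.edgeFinset.filter (fun e => ¬(u ∈ e ∨ v ∈ e))
        ⊆ s.sym2 \ s.image Sym2.diag := by
      intro e he
      rw [mem_filter] at he
      obtain ⟨heE, hnmem⟩ := he
      push_neg at hnmem
      obtain ⟨hue, hve⟩ := hnmem
      revert heE hue hve
      refine Sym2.ind (fun a b => ?_) e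
      intro heE hue hve
      rw [mem_edgeFinset, mem_edgeSet] at heE
      have ha : a ∈ s := by
        rw [hs, mem_compl, mem_insert, mem_singleton]
        rintro (rfl | rfl)
        · exact hue (Sym2.mem_mk_left a b)
        · exact hve (Sym2.mem_mk_left a b)
      have hb : b ∈ s := by
        rw [hs, mem_compl, mem_insert, mem_singleton]
        rintro (rfl | rfl)
        · exact hue (Sym2.mem_mk_right a b)
        · exact hve (Sym2.mem_mk_right a b)
      rw [mem_sdiff, mk_mem_sym2_iff]
      refine ⟨⟨ha, hb⟩, ?_⟩
      rw [mem_image]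
      rintro ⟨c, -, hc⟩
      rw [Sym2.diag, Sym2.eq_iff] at hc
      rcases hc with ⟨rfl, rfl⟩ | ⟨rfl, rfl⟩ <;> exact heE.ne rfl
    have himgsub : s.image Sym2.diag ⊆ s.sym2 := by
      intro e he
      rw [mem_image] at he
      obtain ⟨a, ha, rfl⟩ := he
      rw [Sym2.diag, mk_mem_sym2_iff]
      exact ⟨ha, ha⟩
    calc (G.edgeFinset.filter (fun e => ¬(u ∈ e ∨ v ∈ e))).card
        ≤ (s.sym2 \ s.image Sym2.diag).card := card_le_card hsub
      _ = s.sym2.card - (s.image Sym2.diag).card := card_sdiff_of_subset himgsub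
      _ = Nat.choose (n - 2) 2 := by
          rw [card_sym2, card_image_of_injective _ Sym2.diag_injective, hscard]
          have : (n - 2 + 1).choose 2 = (n - 2).choose 1 + (n - 2).choose 2 :=
            Nat.choose_succ_succ (n - 2) 1
          rw [Nat.choose_one_right] at this
          generalize (n - 2).choose 2 = c at this ⊢
          omega
  omega

/-- For 2 ≤ k and n ≥ k + 2, the maximum number of edges of a connected k*-dense
graph on n vertices is exactly n + k − 3 + C(n−2,2). -/
theorem max_edges_kStarDense (k n : ℕ) (hk : 2 ≤ k) (hn : k + 2 ≤ n) :
    IsGreatest {m : ℕ | ∃ G : SimpleGraph (Fin n),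
        G.Connected ∧ kStarDense G k ∧ G.edgeSet.ncard = m}
      (n + k - 3 + Nat.choose (n - 2) 2) := by
  constructor
  · exact ⟨Gmax k n, Gmax_connected k n hk hn,
      ⟨Gmax_kDense k n hk hn, Gmax_not_kDense k n hk hn⟩,
      by rw [ncard_edgeSet_eq, Gmax_card_edges k n hk hn]⟩
  · rintro m ⟨G, -, hsd, rfl⟩
    exact upper_bound k n hk hn G hsd
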